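/- Let L ⊆ M_{n,d,t} be a t-spread lex set and N ⊆ M_{n,d,t} a t-spread strongly stable set with |L| ≤ |N|. Then |shad_t(L)| ≤ |shad_t(N)|. -/

import Mathlib

open Finset

/-- The set of `t`-spread "monomials" of degree `d` in variables `x_1,...,x_n`,
identified with `d`-element subsets of `{1,...,n}` with consecutive gaps `≥ t`. -/
def M (n d t : ℕ) : Finset (Finset ℕ) :=
  (Finset.powersetCard d (Finset.Icc 1 n)).filter
    (fun F => ∀ i ∈ F, ∀ j ∈ F, i < j → i + t ≤ j)

/-- The `τ`-shadow of a family `L ⊆ M n d t`. -/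
def shad (τ n d : ℕ) (L : Finset (Finset ℕ)) : Finset (Finset ℕ) :=
  (M n (d + 1) τ).filter (fun G => ∃ F ∈ L, F ⊆ G)

/-- `F >_lex G` : the smallest element of the symmetric difference belongs to `F`. -/
def lexGT (F G : Finset ℕ) : Prop :=
  ∃ k, k ∈ F ∧ k ∉ G ∧ ∀ j < k, (j ∈ F ↔ j ∈ G)

/-- `L` is a `t`-spread lex set in `M n d t` (a lex up-set). -/
def IsLexSet (n d t : ℕ) (L : Finset (Finset ℕ)) : Prop :=
  L ⊆ M n d t ∧ ∀ u ∈ L, ∀ v ∈ M n d t, lexGT v u → v ∈ L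

/-- `L` is a `t`-spread strongly stable set in `M n d t`. -/
def IsSSS (n d t : ℕ) (L : Finset (Finset ℕ)) : Prop :=
  L ⊆ M n d t ∧ ∀ F ∈ L, ∀ j ∈ F, ∀ i < j, i ∉ F →
    insert i (F.erase j) ∈ M n d t → insert i (F.erase j) ∈ L

/-- number of members of `L` with maximum element `= i`. -/
def mEq (i : ℕ) (L : Finset (Finset ℕ)) : ℕ :=
  (L.filter (fun F => i ∈ F ∧ ∀ j ∈ F, j ≤ i)).card

/-- number of members of `L` with maximum element `≤ i`. -/
def mLe (i : ℕ) (L : Finset (Finset ℕ)) : ℕ :=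
  (L.filter (fun F => ∀ j ∈ F, j ≤ i)).card

namespace KKaux

/-- the maximum (as a sup) of a finset of naturals -/
def tMax (F : Finset ℕ) : ℕ := F.sup id

lemma le_tMax {F : Finset ℕ} {x : ℕ} (hx : x ∈ F) : x ≤ tMax F :=
  Finset.le_sup (f := id) hx

lemma tMax_le {F : Finset ℕ} {b : ℕ} (h : ∀ x ∈ F, x ≤ b) : tMax F ≤ b :=
  Finset.sup_le h

lemma tMax_le_iff {F : Finset ℕ} {b : ℕ} : tMax F ≤ b ↔ ∀ x ∈ F, x ≤ b :=
  Finset.sup_le_iff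

lemma tMax_mem {F : Finset ℕ} (h : F.Nonempty) : tMax F ∈ F := by
  obtain ⟨b, hb, he⟩ := Finset.exists_mem_eq_sup F h id
  rw [tMax, he]; exact hb

lemma mem_M_iff {n d t : ℕ} {F : Finset ℕ} :
    F ∈ M n d t ↔ F.card = d ∧ F ⊆ Icc 1 n ∧ ∀ i ∈ F, ∀ j ∈ F, i < j → i + t ≤ j := by
  simp only [M, mem_filter, Finset.mem_powersetCard]
  tauto

lemma M_mono {m n d t : ℕ} (h : m ≤ n) : M m d t ⊆ M n d t := by
  intro F hF
  rw [mem_M_iff] at hF ⊢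
  refine ⟨hF.1, fun x hx => ?_, hF.2.2⟩
  have := hF.2.1 hx
  simp only [mem_Icc] at this ⊢
  omega

lemma mem_M_of_le {m n d t : ℕ} {F : Finset ℕ} (hF : F ∈ M n d t)
    (h : ∀ j ∈ F, j ≤ m) : F ∈ M m d t := by
  rw [mem_M_iff] at hF ⊢
  refine ⟨hF.1, fun x hx => ?_, hF.2.2⟩
  have := hF.2.1 hx
  simp only [mem_Icc] at this ⊢
  exact ⟨this.1, h x hx⟩

lemma one_le_of_mem_M {n d t : ℕ} {F : Finset ℕ} (hF : F ∈ M n d t) {x : ℕ}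
    (hx : x ∈ F) : 1 ≤ x := by
  have := (mem_M_iff.mp hF).2.1 hx
  exact (mem_Icc.mp this).1

lemma le_n_of_mem_M {n d t : ℕ} {F : Finset ℕ} (hF : F ∈ M n d t) {x : ℕ}
    (hx : x ∈ F) : x ≤ n := by
  have := (mem_M_iff.mp hF).2.1 hx
  exact (mem_Icc.mp this).2

lemma nonempty_of_mem_M {n d t : ℕ} {F : Finset ℕ} (hF : F ∈ M n d t) (hd : 1 ≤ d) :
    F.Nonempty := by
  rw [← Finset.card_pos, (mem_M_iff.mp hF).1]; omega

lemma insert_mem_M {n t e j : ℕ} {u : Finset ℕ} (hu : u ∈ M (n - t) e t)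
    (ht : 1 ≤ t) (hj1 : 1 ≤ j) (hjt : ∀ x ∈ u, x + t ≤ j) (hjn : j ≤ n) :
    insert j u ∈ M n (e + 1) t := by
  rw [mem_M_iff] at hu ⊢
  have hju : j ∉ u := fun h => by have := hjt j h; omega
  refine ⟨by rw [Finset.card_insert_of_notMem hju, hu.1], ?_, ?_⟩
  · intro x hx
    rcases Finset.mem_insert.mp hx with rfl | hx
    · simp only [mem_Icc]; omega
    · have := hu.2.1 hx; simp only [mem_Icc] at this ⊢; omega
  · intro a ha b hb hab
    rcases Finset.mem_insert.mp ha with rfl | ha'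
    · rcases Finset.mem_insert.mp hb with rfl | hb'
      · omega
      · have := hjt b hb'; omega
    · rcases Finset.mem_insert.mp hb with rfl | hb'
      · exact hjt a ha'
      · exact hu.2.2 a ha' b hb' hab

lemma erase_max_mem_M {n d t : ℕ} {F : Finset ℕ} (hF : F ∈ M n d t) (ht : 1 ≤ t)
    {j : ℕ} (hj : j ∈ F) (hmax : ∀ x ∈ F, x ≤ j) :
    F.erase j ∈ M (n - t) (d - 1) t := by
  rw [mem_M_iff] at hF ⊢
  refine ⟨by rw [Finset.card_erase_of_mem hj, hF.1], ?_, ?_⟩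
  · intro x hx
    have hxF := Finset.mem_of_mem_erase hx
    have hxj : x ≠ j := Finset.ne_of_mem_erase hx
    have hxlt : x < j := lt_of_le_of_ne (hmax x hxF) hxj
    have h1 := hF.2.2 x hxF j hj hxlt
    have h2 := hF.2.1 hj
    have h3 := hF.2.1 hxF
    simp only [mem_Icc] at h2 h3 ⊢
    omega
  · intro a ha b hb hab
    exact hF.2.2 a (Finset.mem_of_mem_erase ha) b (Finset.mem_of_mem_erase hb) hab

lemma lexGT_total {u v : Finset ℕ} (h : u ≠ v) : lexGT u v ∨ lexGT v u := by
  set s := (u \ v) ∪ (v \ u) with hs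
  have hne : s.Nonempty := by
    by_contra hempty
    rw [Finset.not_nonempty_iff_eq_empty] at hempty
    apply h
    ext x
    constructor <;> intro hx <;> by_contra hx'
    · have : x ∈ s := by simp [hs, hx, hx']
      simp [hempty] at this
    · have : x ∈ s := by simp [hs, hx, hx']
      simp [hempty] at this
  set k := s.min' hne with hk
  have hks : k ∈ s := Finset.min'_mem s hne
  have hagree : ∀ j < k, (j ∈ u ↔ j ∈ v) := by
    intro j hj
    by_contra hiff
    have hjs : j ∈ s := by
      simp only [hs, Finset.mem_union, Finset.mem_sdiff]
      tauto
    have := Finset.min'_le s j hjs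
    omega
  rcases Finset.mem_union.mp hks with hk' | hk'
  · exact Or.inl ⟨k, (Finset.mem_sdiff.mp hk').1, (Finset.mem_sdiff.mp hk').2, hagree⟩
  · exact Or.inr ⟨k, (Finset.mem_sdiff.mp hk').1, (Finset.mem_sdiff.mp hk').2,
      fun j hj => (hagree j hj).symm⟩

/-- serial lemma: appending a large element preserves lex comparison -/
lemma ser {u v : Finset ℕ} {j j' : ℕ} (hcard : u.card = v.card)
    (hju : ∀ x ∈ u, x < j) (hjv : ∀ x ∈ v, x < j')
    (h : lexGT u v) : lexGT (insert j u) (insert j' v) := by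
  obtain ⟨k, hku, hkv, hagree⟩ := h
  have hkj' : k < j' := by
    by_contra hle
    push_neg at hle
    have hsub : v ⊆ u.erase k := by
      intro x hx
      have hxk : x < k := lt_of_lt_of_le (hjv x hx) hle
      exact Finset.mem_erase.mpr ⟨by omega, (hagree x hxk).mpr hx⟩
    have hle2 := Finset.card_le_card hsub
    rw [Finset.card_erase_of_mem hku] at hle2
    have hpos : 0 < u.card := Finset.card_pos.mpr ⟨k, hku⟩
    omega
  refine ⟨k, Finset.mem_insert_of_mem hku, ?_, ?_⟩
  · intro hk
    rcases Finset.mem_insert.mp hk with rfl | hk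
    · omega
    · exact hkv hk
  · intro a ha
    have haj : a ≠ j := by have := hju k hku; omega
    have haj' : a ≠ j' := by omega
    simp only [Finset.mem_insert]
    constructor
    · rintro (rfl | hau)
      · omega
      · exact Or.inr ((hagree a ha).mp hau)
    · rintro (rfl | hav)
      · omega
      · exact Or.inr ((hagree a ha).mpr hav)



lemma lex_isSSS {n d t : ℕ} {L : Finset (Finset ℕ)} (hL : IsLexSet n d t L) :
    IsSSS n d t L := by
  refine ⟨hL.1, fun F hF j hj i hij hiF hmem => ?_⟩
  refine hL.2 F hF _ hmem ⟨i, Finset.mem_insert_self _ _, hiF, fun a ha => ?_⟩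
  simp only [Finset.mem_insert, Finset.mem_erase]
  constructor
  · rintro (rfl | ⟨_, hau⟩)
    · omega
    · exact hau
  · intro haF
    exact Or.inr ⟨by omega, haF⟩

lemma mLe_def (i : ℕ) (L : Finset (Finset ℕ)) :
    mLe i L = (L.filter (fun F => ∀ j ∈ F, j ≤ i)).card := rfl

lemma mLe_full {n d t i : ℕ} {X : Finset (Finset ℕ)} (hX : X ⊆ M n d t) (hni : n ≤ i) :
    mLe i X = X.card := by
  rw [mLe_def]
  congr 1
  apply Finset.filter_true_of_mem
  intro F hF j hj
  exact le_trans (le_n_of_mem_M (hX hF) hj) hni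

lemma mLe_add_top {n d t : ℕ} {X : Finset (Finset ℕ)} (hX : X ⊆ M n d t) :
    mLe (n - 1) X + (X.filter (fun F => n ∈ F)).card = X.card := by
  have heq : X.filter (fun F => ¬ ∀ j ∈ F, j ≤ n - 1) = X.filter (fun F => n ∈ F) := by
    apply Finset.filter_congr
    intro F hF
    constructor
    · intro h
      by_contra hnF
      apply h
      intro j hj
      have h1 := le_n_of_mem_M (hX hF) hj
      have h2 : j ≠ n := fun e => hnF (e ▸ hj)
      omega
    · intro hn hall
      have h1 := hall n hn
      have h2 := one_le_of_mem_M (hX hF) hn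
      omega
  rw [mLe_def, ← heq]
  exact Finset.card_filter_add_card_filter_not _

lemma sum_count_swap (S : Finset (Finset ℕ)) (I : Finset ℕ) :
    ∑ u ∈ S, (I.filter (fun i => ∀ j ∈ u, j ≤ i)).card
      = ∑ i ∈ I, mLe i S := by
  simp only [mLe_def, Finset.card_filter]
  exact Finset.sum_comm

lemma countIcc {u : Finset ℕ} {t b : ℕ} (h1 : 1 ≤ tMax u) (ht : 1 ≤ t) :
    (Icc (tMax u + t) b).card = ((Icc 1 (b - t)).filter (fun i => ∀ j ∈ u, j ≤ i)).card := by
  have heq : (Icc 1 (b - t)).filter (fun i => ∀ j ∈ u, j ≤ i) = Icc (tMax u) (b - t) := by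
    ext i
    simp only [Finset.mem_filter, Finset.mem_Icc]
    constructor
    · rintro ⟨⟨hi1, hi2⟩, hall⟩
      exact ⟨tMax_le hall, hi2⟩
    · rintro ⟨hi1, hi2⟩
      exact ⟨⟨by omega, hi2⟩, fun j hj => le_trans (le_tMax hj) hi1⟩
  rw [heq, Nat.card_Icc, Nat.card_Icc]
  omega

lemma tMax_insert {u : Finset ℕ} {j : ℕ} (hj : ∀ x ∈ u, x < j) :
    tMax (insert j u) = j := by
  rw [tMax, Finset.sup_insert]
  have : u.sup id ≤ j := Finset.sup_le (fun x hx => le_of_lt (hj x hx))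
  simp only [id]
  omega

lemma erase_insert' {u : Finset ℕ} {j : ℕ} (hj : ∀ x ∈ u, x < j) :
    (insert j u).erase j = u :=
  Finset.erase_insert (fun h => by have := hj j h; omega)

/-- the shadow of an SSS family as a disjoint union of fibers -/
lemma shad_eq {n d t : ℕ} {S : Finset (Finset ℕ)} (hS : IsSSS n d t S)
    (ht : 1 ≤ t) (hd : 1 ≤ d) :
    shad t n d S = S.biUnion (fun F => (Icc (tMax F + t) n).image (fun j => insert j F)) := by
  ext G
  simp only [shad, Finset.mem_filter, Finset.mem_biUnion, Finset.mem_image, Finset.mem_Icc]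
  constructor
  · rintro ⟨hGM, F, hFS, hFG⟩
    have hFM := hS.1 hFS
    have hcards : F.card = d := (mem_M_iff.mp hFM).1
    have hcardG : G.card = d + 1 := (mem_M_iff.mp hGM).1
    -- G = insert k F for unique k
    have hcardsd : (G \ F).card = 1 := by
      rw [Finset.card_sdiff_of_subset hFG]; omega
    obtain ⟨k, hk⟩ := Finset.card_eq_one.mp hcardsd
    have hkG : k ∈ G := (Finset.mem_sdiff.mp (hk ▸ Finset.mem_singleton_self k)).1
    have hkF : k ∉ F := (Finset.mem_sdiff.mp (hk ▸ Finset.mem_singleton_self k)).2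
    have hGik : G = insert k F := by
      symm
      apply Finset.eq_of_subset_of_card_le
      · intro x hx
        rcases Finset.mem_insert.mp hx with rfl | hx
        · exact hkG
        · exact hFG hx
      · rw [hcardG, Finset.card_insert_of_notMem hkF, hcards]
    set m := tMax G with hm
    have hGne : G.Nonempty := nonempty_of_mem_M hGM (by omega)
    have hmG : m ∈ G := tMax_mem hGne
    have hspreadG := (mem_M_iff.mp hGM).2.2
    by_cases hkm : k = m
    · -- head is F itself
      refine ⟨F, hFS, m, ⟨?_, le_n_of_mem_M hGM hmG⟩, ?_⟩
      · -- tMax F + t ≤ m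
        have hFne : F.Nonempty := nonempty_of_mem_M hFM hd
        have hMF : tMax F ∈ F := tMax_mem hFne
        have h1 : tMax F ∈ G := hFG hMF
        have h2 : tMax F ≠ m := by rw [← hkm]; intro h; exact hkF (h ▸ hMF)
        have h3 : tMax F < m := lt_of_le_of_ne (le_tMax h1) h2
        exact hspreadG _ h1 m hmG h3
      · rw [hGik, hkm]
    · -- max m belongs to F ; head is insert k (F.erase m)
      have hmF : m ∈ F := by
        have hmG' : m ∈ insert k F := by rw [← hGik]; exact hmG
        rcases Finset.mem_insert.mp hmG' with h | h
        · exact absurd h.symm hkm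
        · exact h
      have hkm' : k < m := lt_of_le_of_ne (le_tMax hkG) hkm
      set G' := G.erase m with hG'
      have hG'M : G' ∈ M n d t := by
        rw [mem_M_iff]
        refine ⟨?_, ?_, ?_⟩
        · rw [Finset.card_erase_of_mem hmG, hcardG]; omega
        · exact fun x hx => (mem_M_iff.mp hGM).2.1 (Finset.mem_of_mem_erase hx)
        · exact fun a ha b hb hab =>
            hspreadG a (Finset.mem_of_mem_erase ha) b (Finset.mem_of_mem_erase hb) hab
      have hG'form : G' = insert k (F.erase m) := by
        rw [hG', hGik, Finset.erase_insert_of_ne hkm]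
      have hG'S : G' ∈ S := by
        rw [hG'form]
        exact hS.2 F hFS m hmF k hkm' hkF (hG'form ▸ hG'M)
      refine ⟨G', hG'S, m, ⟨?_, le_n_of_mem_M hGM hmG⟩, ?_⟩
      · have hG'ne : G'.Nonempty := nonempty_of_mem_M hG'M hd
        have h1 : tMax G' ∈ G := Finset.mem_of_mem_erase (tMax_mem hG'ne)
        have h2 : tMax G' ≠ m := Finset.ne_of_mem_erase (tMax_mem hG'ne)
        have h3 : tMax G' < m := lt_of_le_of_ne (le_tMax h1) h2
        exact hspreadG _ h1 m hmG h3
      · rw [hG', Finset.insert_erase hmG]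
  · rintro ⟨F, hFS, j, ⟨hj1, hj2⟩, rfl⟩
    have hFM := hS.1 hFS
    have hFne : F.Nonempty := nonempty_of_mem_M hFM hd
    have hins : insert j F ∈ M n (d + 1) t := by
      have : F ∈ M (n - t) d t := by
        apply mem_M_of_le hFM
        intro x hx
        have := le_tMax hx
        have hxn := le_n_of_mem_M hFM hx
        omega
      have := insert_mem_M this ht (by
          have := one_le_of_mem_M hFM (tMax_mem hFne)
          omega)
        (fun x hx => by have := le_tMax hx; omega) hj2
      exact this
    exact ⟨hins, F, hFS, Finset.subset_insert _ _⟩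

lemma card_shad_eq {n d t : ℕ} {S : Finset (Finset ℕ)} (hS : IsSSS n d t S)
    (ht : 1 ≤ t) (hd : 1 ≤ d) :
    (shad t n d S).card = ∑ i ∈ Icc 1 (n - t), mLe i S := by
  rw [shad_eq hS ht hd]
  rw [Finset.card_biUnion]
  · rw [← sum_count_swap]
    apply Finset.sum_congr rfl
    intro F hF
    have hFM := hS.1 hF
    have hFne : F.Nonempty := nonempty_of_mem_M hFM hd
    have h1 : 1 ≤ tMax F := one_le_of_mem_M hFM (tMax_mem hFne)
    have hinj : Set.InjOn (fun j => insert j F) (Icc (tMax F + t) n) := by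
      intro a ha b hb hab
      simp only [Finset.coe_Icc, Set.mem_Icc] at ha hb
      have hfa : ∀ x ∈ F, x < a := fun x hx => by have := le_tMax hx; omega
      have hfb : ∀ x ∈ F, x < b := fun x hx => by have := le_tMax hx; omega
      simp only at hab
      rw [← tMax_insert hfa, hab, tMax_insert hfb]
    rw [Finset.card_image_of_injOn hinj, countIcc h1 ht]
  · intro F₁ h₁ F₂ h₂ hne
    simp only [Finset.disjoint_left]
    intro G hG1 hG2
    simp only [Finset.mem_image, Finset.mem_Icc] at hG1 hG2
    obtain ⟨j₁, ⟨hj₁, hj₁'⟩, rfl⟩ := hG1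
    obtain ⟨j₂, ⟨hj₂, hj₂'⟩, heq⟩ := hG2
    have hf1 : ∀ x ∈ F₁, x < j₁ := fun x hx => by have := le_tMax hx; omega
    have hf2 : ∀ x ∈ F₂, x < j₂ := fun x hx => by have := le_tMax hx; omega
    have hj : j₂ = j₁ := by rw [← tMax_insert hf2, heq, tMax_insert hf1]
    apply hne
    rw [← erase_insert' hf1, ← heq, ← hj, erase_insert' hf2]

lemma tMax_singleton (x : ℕ) : tMax ({x} : Finset ℕ) = x := by
  simp [tMax]

lemma card_biUnion_fibers (S : Finset (Finset ℕ)) (b t : ℕ) (ht : 1 ≤ t) :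
    (S.biUnion (fun u => (Icc (tMax u + t) b).image (fun j => insert j u))).card
      = ∑ u ∈ S, (Icc (tMax u + t) b).card := by
  rw [Finset.card_biUnion]
  · apply Finset.sum_congr rfl
    intro u _
    apply Finset.card_image_of_injOn
    intro a ha c hc hac
    simp only [Finset.coe_Icc, Set.mem_Icc] at ha hc
    have hfa : ∀ x ∈ u, x < a := fun x hx => by have := le_tMax hx; omega
    have hfc : ∀ x ∈ u, x < c := fun x hx => by have := le_tMax hx; omega
    simp only at hac
    rw [← tMax_insert hfa, hac, tMax_insert hfc]
  · intro F₁ _ F₂ _ hne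
    simp only [Finset.disjoint_left]
    intro G hG1 hG2
    simp only [Finset.mem_image, Finset.mem_Icc] at hG1 hG2
    obtain ⟨j₁, ⟨hj₁, _⟩, rfl⟩ := hG1
    obtain ⟨j₂, ⟨hj₂, _⟩, heq⟩ := hG2
    have hf1 : ∀ x ∈ F₁, x < j₁ := fun x hx => by have := le_tMax hx; omega
    have hf2 : ∀ x ∈ F₂, x < j₂ := fun x hx => by have := le_tMax hx; omega
    have hj : j₂ = j₁ := by rw [← tMax_insert hf2, heq, tMax_insert hf1]
    apply hne
    rw [← erase_insert' hf1, ← heq, ← hj, erase_insert' hf2]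

/-- The key induction step: compare the counts of members avoiding `n`. -/
lemma Rstep (n d t : ℕ) (ht : 1 ≤ t) (hd : 1 ≤ d)
    (IH : 2 ≤ d → ∀ L' N' : Finset (Finset ℕ), IsLexSet (n - t) (d - 1) t L' →
      IsSSS (n - t) (d - 1) t N' → L'.card ≤ N'.card → ∀ i, mLe i L' ≤ mLe i N')
    (L N : Finset (Finset ℕ)) (hL : IsLexSet n d t L) (hN : IsSSS n d t N)
    (hcard : L.card ≤ N.card) : mLe (n - 1) L ≤ mLe (n - 1) N := by
  have hLtop := mLe_add_top hL.1
  have hNtop := mLe_add_top hN.1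
  by_cases hTn : (N.filter (fun F => n ∈ F)).card ≤ (L.filter (fun F => n ∈ F)).card
  · omega
  push_neg at hTn
  have hTnN : (N.filter (fun F => n ∈ F)).Nonempty := by
    rw [← Finset.card_pos]; omega
  obtain ⟨F₀, hF₀⟩ := hTnN
  rw [Finset.mem_filter] at hF₀
  obtain ⟨hF₀N, hnF₀⟩ := hF₀
  have hF₀M := hN.1 hF₀N
  have hn1 : 1 ≤ n := one_le_of_mem_M hF₀M hnF₀
  by_cases hd2 : d = 1
  · -- degree-one case
    subst hd2
    have hF₀card : F₀.card = 1 := (mem_M_iff.mp hF₀M).1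
    have hF₀eq : F₀ = {n} := by
      obtain ⟨a, ha⟩ := Finset.card_eq_one.mp hF₀card
      rw [ha] at hnF₀ ⊢
      rw [Finset.mem_singleton] at hnF₀
      rw [hnF₀]
    -- lower bound: N contains all singletons {j}, j ≤ n-1
    have hsub : (Icc 1 (n-1)).image (fun j => ({j} : Finset ℕ)) ⊆
        N.filter (fun F => ∀ j ∈ F, j ≤ n - 1) := by
      intro F hF
      simp only [Finset.mem_image, Finset.mem_Icc] at hF
      obtain ⟨j, ⟨hj1, hj2⟩, rfl⟩ := hF
      have hjM : ({j} : Finset ℕ) ∈ M n 1 t := by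
        rw [mem_M_iff]
        refine ⟨Finset.card_singleton j, ?_, ?_⟩
        · intro x hx
          rw [Finset.mem_singleton] at hx
          subst hx
          simp only [Finset.mem_Icc]
          omega
        · intro a ha b hb hab
          rw [Finset.mem_singleton] at ha hb
          omega
      have herase : F₀.erase n = ∅ := by rw [hF₀eq]; exact Finset.erase_singleton n
      have hinsert : insert j (F₀.erase n) = ({j} : Finset ℕ) := by
        rw [herase]; rfl
      have hjn : j ∉ F₀ := by
        rw [hF₀eq, Finset.mem_singleton]; omega
      have hmem : insert j (F₀.erase n) ∈ M n 1 t := by rw [hinsert]; exact hjM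
      have := hN.2 F₀ hF₀N n hnF₀ j (by omega) hjn hmem
      rw [hinsert] at this
      rw [Finset.mem_filter]
      exact ⟨this, fun x hx => by rw [Finset.mem_singleton] at hx; omega⟩
    have hNge : n - 1 ≤ mLe (n-1) N := by
      have h1 := Finset.card_le_card hsub
      have h2 : ((Icc 1 (n-1)).image (fun j => ({j} : Finset ℕ))).card = n - 1 := by
        rw [Finset.card_image_of_injOn (fun a _ b _ hab => by
          simpa using Finset.singleton_inj.mp hab), Nat.card_Icc]
        omega
      rw [mLe_def]; omega
    have hLle : mLe (n-1) L ≤ n - 1 := by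
      have h1 : (L.filter (fun F => ∀ j ∈ F, j ≤ n - 1)).card ≤ (Icc 1 (n-1)).card := by
        apply Finset.card_le_card_of_injOn (fun F => tMax F)
        · intro F hF
          rw [Finset.mem_coe, Finset.mem_filter] at hF
          have hFM := hL.1 hF.1
          have hFne : F.Nonempty := nonempty_of_mem_M hFM (by omega)
          simp only [Finset.mem_coe, Finset.mem_Icc]
          exact ⟨one_le_of_mem_M hFM (tMax_mem hFne), tMax_le hF.2⟩
        · intro a ha b hb hab
          simp only [Finset.mem_coe, Finset.mem_filter] at ha hb
          obtain ⟨x, hx⟩ := Finset.card_eq_one.mp ((mem_M_iff.mp (hL.1 ha.1)).1)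
          obtain ⟨y, hy⟩ := Finset.card_eq_one.mp ((mem_M_iff.mp (hL.1 hb.1)).1)
          rw [hx, hy] at hab ⊢
          have hxy : x = y := by simpa [tMax_singleton] using hab
          rw [hxy]
      rw [mLe_def, Nat.card_Icc] at *
      omega
    omega
  -- main case : d ≥ 2
  have hd2' : 2 ≤ d := by omega
  have hnt : t + 1 ≤ n := by
    have hcard₀ : F₀.card = d := (mem_M_iff.mp hF₀M).1
    have hex : ∃ x ∈ F₀, x ≠ n := by
      by_contra hno
      push_neg at hno
      have hsub : F₀ ⊆ {n} := fun x hx => Finset.mem_singleton.mpr (hno x hx)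
      have := Finset.card_le_card hsub
      rw [hcard₀, Finset.card_singleton] at this
      omega
    obtain ⟨x, hxF, hxn⟩ := hex
    have hx1 := one_le_of_mem_M hF₀M hxF
    have hxlt : x < n := lt_of_le_of_ne (le_n_of_mem_M hF₀M hxF) hxn
    have := (mem_M_iff.mp hF₀M).2.2 x hxF n hnF₀ hxlt
    omega
  have hd11 : d - 1 + 1 = d := by omega
  set TnL := L.filter (fun F => n ∈ F) with hTnL
  set TnN := N.filter (fun F => n ∈ F) with hTnNdef
  set τL := TnL.image (fun F => F.erase n) with hτL
  set τN := TnN.image (fun F => F.erase n) with hτNdef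
  have hcτL : τL.card = TnL.card := by
    apply Finset.card_image_of_injOn
    intro a ha b hb hab
    simp only [Finset.mem_coe, hTnL, Finset.mem_filter] at ha hb
    simp only at hab
    rw [← Finset.insert_erase ha.2, hab, Finset.insert_erase hb.2]
  have hcτN : τN.card = TnN.card := by
    apply Finset.card_image_of_injOn
    intro a ha b hb hab
    simp only [Finset.mem_coe, hTnNdef, Finset.mem_filter] at ha hb
    simp only at hab
    rw [← Finset.insert_erase ha.2, hab, Finset.insert_erase hb.2]
  have hτLM : ∀ u ∈ τL, u ∈ M (n-t) (d-1) t := by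
    intro u hu
    rw [hτL, Finset.mem_image] at hu
    obtain ⟨F, hF, rfl⟩ := hu
    rw [hTnL, Finset.mem_filter] at hF
    exact erase_max_mem_M (hL.1 hF.1) ht hF.2 (fun x hx => le_n_of_mem_M (hL.1 hF.1) hx)
  have hτNM : ∀ u ∈ τN, u ∈ M (n-t) (d-1) t := by
    intro u hu
    rw [hτNdef, Finset.mem_image] at hu
    obtain ⟨F, hF, rfl⟩ := hu
    rw [hTnNdef, Finset.mem_filter] at hF
    exact erase_max_mem_M (hN.1 hF.1) ht hF.2 (fun x hx => le_n_of_mem_M (hN.1 hF.1) hx)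
  -- inserting n into a member of M (n-t) (d-1) t
  have hinsn : ∀ u : Finset ℕ, u ∈ M (n-t) (d-1) t → insert n u ∈ M n d t ∧ n ∉ u := by
    intro u huM
    have hnu : n ∉ u := by
      intro hn
      have := le_n_of_mem_M huM hn
      omega
    have h := insert_mem_M huM ht (by omega)
      (fun x hx => by have := le_n_of_mem_M huM hx; omega) (le_refl n)
    rw [hd11] at h
    exact ⟨h, hnu⟩
  -- τN is strongly stable
  have hτN_SSS : IsSSS (n-t) (d-1) t τN := by
    refine ⟨fun u hu => hτNM u hu, ?_⟩
    intro u hu j hj i hij hiu hmem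
    have huorig := hu
    rw [hτNdef, Finset.mem_image] at hu
    obtain ⟨F, hF, hFu⟩ := hu
    rw [hTnNdef, Finset.mem_filter] at hF
    have huM := hτNM u huorig
    set v := insert i (u.erase j) with hv
    obtain ⟨hinsvM, hnv⟩ := hinsn v hmem
    have hFeq : F = insert n u := by rw [← hFu, Finset.insert_erase hF.2]
    have hjF : j ∈ F := by rw [hFeq]; exact Finset.mem_insert_of_mem hj
    have hjn : j ≠ n := by
      intro h
      have := le_n_of_mem_M huM hj
      omega
    have hiF : i ∉ F := by
      rw [hFeq]
      intro h
      rcases Finset.mem_insert.mp h with rfl | h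
      · have := le_n_of_mem_M huM hj; omega
      · exact hiu h
    have hset : insert i (F.erase j) = insert n v := by
      rw [hFeq, Finset.erase_insert_of_ne (Ne.symm hjn), hv, Finset.insert_comm]
    have hmem2 : insert i (F.erase j) ∈ M n d t := by rw [hset]; exact hinsvM
    have hres := hN.2 F hF.1 j hjF i hij hiF hmem2
    rw [hset] at hres
    rw [hτNdef, Finset.mem_image]
    refine ⟨insert n v, ?_, ?_⟩
    · rw [hTnNdef, Finset.mem_filter]
      exact ⟨hres, Finset.mem_insert_self _ _⟩
    · exact Finset.erase_insert hnv
  -- the A-part : heads of members of L avoiding n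
  set A := (L.filter (fun F => ∀ j ∈ F, j ≤ n - 1)).image (fun F => F.erase (tMax F)) with hA
  have hAM : ∀ u ∈ A, u ∈ M (n-t) (d-1) t := by
    intro u hu
    rw [hA, Finset.mem_image] at hu
    obtain ⟨F, hF, rfl⟩ := hu
    rw [Finset.mem_filter] at hF
    have hFM := hL.1 hF.1
    have hFne : F.Nonempty := nonempty_of_mem_M hFM hd
    exact erase_max_mem_M hFM ht (tMax_mem hFne) (fun x hx => le_tMax hx)
  -- main exchange principle via the serial lemma
  have hGEN : ∀ u v jv, u ∈ M (n-t) (d-1) t → v.card = d - 1 → lexGT u v →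
      (∀ x ∈ v, x < jv) → insert jv v ∈ L → u ∈ τL := by
    intro u v jv huM hvcard hlex hjv hvL
    have hucard : u.card = d - 1 := (mem_M_iff.mp huM).1
    have hun : ∀ x ∈ u, x < n := fun x hx => by
      have := le_n_of_mem_M huM hx; omega
    have hser : lexGT (insert n u) (insert jv v) := ser (by omega) hun hjv hlex
    obtain ⟨hinsM, hnu⟩ := hinsn u huM
    have hinsL : insert n u ∈ L := hL.2 _ hvL _ hinsM hser
    rw [hτL, Finset.mem_image]
    refine ⟨insert n u, ?_, Finset.erase_insert hnu⟩
    rw [hTnL, Finset.mem_filter]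
    exact ⟨hinsL, Finset.mem_insert_self _ _⟩
  -- representation of elements of τL
  have hτLrep : ∀ u ∈ τL, ∃ jv, insert jv u ∈ L ∧ (∀ x ∈ u, x < jv) := by
    intro u hu
    rw [hτL, Finset.mem_image] at hu
    obtain ⟨F, hF, rfl⟩ := hu
    rw [hTnL, Finset.mem_filter] at hF
    refine ⟨n, ?_, ?_⟩
    · rw [Finset.insert_erase hF.2]; exact hF.1
    · intro x hx
      have h1 := le_n_of_mem_M (hL.1 hF.1) (Finset.mem_of_mem_erase hx)
      have h2 := Finset.ne_of_mem_erase hx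
      omega
  -- representation of elements of A
  have hArep : ∀ u ∈ A, ∃ jv, insert jv u ∈ L ∧ (∀ x ∈ u, x < jv) := by
    intro u hu
    rw [hA, Finset.mem_image] at hu
    obtain ⟨F, hF, rfl⟩ := hu
    rw [Finset.mem_filter] at hF
    have hFM := hL.1 hF.1
    have hFne : F.Nonempty := nonempty_of_mem_M hFM hd
    refine ⟨tMax F, ?_, ?_⟩
    · rw [Finset.insert_erase (tMax_mem hFne)]; exact hF.1
    · intro x hx
      have h1 := le_tMax (Finset.mem_of_mem_erase hx)
      have h2 := Finset.ne_of_mem_erase hx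
      omega
  set τ' := τL ∪ A with hτ'
  have hτ'M : ∀ u ∈ τ', u ∈ M (n-t) (d-1) t := by
    intro u hu
    rcases Finset.mem_union.mp hu with h | h
    · exact hτLM u h
    · exact hAM u h
  have hτ'rep : ∀ u ∈ τ', ∃ jv, insert jv u ∈ L ∧ (∀ x ∈ u, x < jv) := by
    intro u hu
    rcases Finset.mem_union.mp hu with h | h
    · exact hτLrep u h
    · exact hArep u h
  have hτ'lex : IsLexSet (n-t) (d-1) t τ' := by
    refine ⟨fun u hu => hτ'M u hu, ?_⟩
    intro u hu v hv hlex
    obtain ⟨jv, hjvL, hjv⟩ := hτ'rep u hu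
    have hucard : u.card = d - 1 := (mem_M_iff.mp (hτ'M u hu)).1
    exact Finset.mem_union_left _ (hGEN v u jv hv hucard hlex hjv hjvL)
  have hA1 : (A \ τL).card ≤ 1 := by
    rw [Finset.card_le_one]
    intro a ha b hb
    by_contra hab
    rw [Finset.mem_sdiff] at ha hb
    have hacard : a.card = d - 1 := (mem_M_iff.mp (hAM a ha.1)).1
    have hbcard : b.card = d - 1 := (mem_M_iff.mp (hAM b hb.1)).1
    rcases lexGT_total hab with h | h
    · obtain ⟨jv, hjvL, hjv⟩ := hArep b hb.1
      exact ha.2 (hGEN a b jv (hAM a ha.1) hbcard h hjv hjvL)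
    · obtain ⟨jv, hjvL, hjv⟩ := hArep a ha.1
      exact hb.2 (hGEN b a jv (hAM b hb.1) hacard h hjv hjvL)
  have hτ'card : τ'.card ≤ τN.card := by
    have h1 : τ' = τL ∪ (A \ τL) := by rw [hτ', Finset.union_sdiff_self_eq_union]
    have h2 : τ'.card ≤ τL.card + (A \ τL).card := by
      rw [h1]; exact Finset.card_union_le _ _
    omega
  have hIH := IH hd2' τ' τN hτ'lex hτN_SSS hτ'card
  -- counting : generic sum identity
  have hsumeq : ∀ S : Finset (Finset ℕ), (∀ u ∈ S, u ∈ M (n-t) (d-1) t) →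
      ∑ u ∈ S, (Icc (tMax u + t) (n-1)).card = ∑ i ∈ Icc 1 (n - 1 - t), mLe i S := by
    intro S hSM
    rw [← sum_count_swap]
    apply Finset.sum_congr rfl
    intro u hu
    have huM := hSM u hu
    have hune : u.Nonempty := nonempty_of_mem_M huM (by omega)
    exact countIcc (one_le_of_mem_M huM (tMax_mem hune)) ht
  -- L-side upper bound
  have hLcount : mLe (n-1) L ≤ ∑ i ∈ Icc 1 (n - 1 - t), mLe i τ' := by
    have hLsub : L.filter (fun F => ∀ j ∈ F, j ≤ n - 1) ⊆
        τ'.biUnion (fun u => (Icc (tMax u + t) (n-1)).image (fun j => insert j u)) := by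
      intro F hF
      have hFfil := hF
      rw [Finset.mem_filter] at hF
      have hFM := hL.1 hF.1
      have hFne : F.Nonempty := nonempty_of_mem_M hFM hd
      have hmF : tMax F ∈ F := tMax_mem hFne
      have huA : F.erase (tMax F) ∈ A := by
        rw [hA]; exact Finset.mem_image_of_mem _ hFfil
      have huM : F.erase (tMax F) ∈ M (n-t) (d-1) t := hAM _ huA
      have hune : (F.erase (tMax F)).Nonempty := nonempty_of_mem_M huM (by omega)
      rw [Finset.mem_biUnion]
      refine ⟨F.erase (tMax F), Finset.mem_union_right _ huA, ?_⟩
      rw [Finset.mem_image]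
      refine ⟨tMax F, ?_, Finset.insert_erase hmF⟩
      rw [Finset.mem_Icc]
      constructor
      · have h1 : tMax (F.erase (tMax F)) ∈ F := Finset.mem_of_mem_erase (tMax_mem hune)
        have h2 : tMax (F.erase (tMax F)) ≠ tMax F := Finset.ne_of_mem_erase (tMax_mem hune)
        exact (mem_M_iff.mp hFM).2.2 _ h1 (tMax F) hmF (lt_of_le_of_ne (le_tMax h1) h2)
      · exact tMax_le hF.2
    calc mLe (n-1) L ≤ (τ'.biUnion (fun u => (Icc (tMax u + t) (n-1)).image (fun j => insert j u))).card := by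
            rw [mLe_def]; exact Finset.card_le_card hLsub
      _ ≤ ∑ u ∈ τ', ((Icc (tMax u + t) (n-1)).image (fun j => insert j u)).card :=
            Finset.card_biUnion_le
      _ ≤ ∑ u ∈ τ', (Icc (tMax u + t) (n-1)).card :=
            Finset.sum_le_sum (fun u _ => Finset.card_image_le)
      _ = ∑ i ∈ Icc 1 (n - 1 - t), mLe i τ' := hsumeq τ' hτ'M
  -- N-side lower bound
  have hNcount : ∑ i ∈ Icc 1 (n - 1 - t), mLe i τN ≤ mLe (n-1) N := by
    have hNsub : τN.biUnion (fun u => (Icc (tMax u + t) (n-1)).image (fun j => insert j u)) ⊆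
        N.filter (fun F => ∀ j ∈ F, j ≤ n - 1) := by
      intro G hG
      rw [Finset.mem_biUnion] at hG
      obtain ⟨u, hu, hG⟩ := hG
      rw [Finset.mem_image] at hG
      obtain ⟨j, hj, rfl⟩ := hG
      rw [Finset.mem_Icc] at hj
      have huM := hτNM u hu
      have huorig := hu
      rw [hτNdef, Finset.mem_image] at hu
      obtain ⟨F, hF, hFu⟩ := hu
      rw [hTnNdef, Finset.mem_filter] at hF
      have hFeq : F = insert n u := by rw [← hFu, Finset.insert_erase hF.2]
      have hjn : j < n := by omega
      have hjF : j ∉ F := by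
        rw [hFeq]
        intro h
        rcases Finset.mem_insert.mp h with rfl | h
        · omega
        · have := le_tMax h; omega
      have hinsjM : insert j u ∈ M n d t := by
        have hune : u.Nonempty := nonempty_of_mem_M huM (by omega)
        have h1t : 1 ≤ tMax u := one_le_of_mem_M huM (tMax_mem hune)
        have hj1 : 1 ≤ j := by omega
        have hjle : j ≤ n := by omega
        have hjt : ∀ x ∈ u, x + t ≤ j := fun x hx => by have := le_tMax hx; omega
        have h := insert_mem_M huM ht hj1 hjt hjle
        rw [hd11] at h
        exact h
      have hmem2 : insert j (F.erase n) ∈ M n d t := by rw [hFu]; exact hinsjM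
      have hres := hN.2 F hF.1 n hF.2 j hjn hjF hmem2
      rw [hFu] at hres
      rw [Finset.mem_filter]
      refine ⟨hres, ?_⟩
      intro x hx
      rcases Finset.mem_insert.mp hx with rfl | hx
      · omega
      · have := le_n_of_mem_M huM hx; omega
    calc ∑ i ∈ Icc 1 (n - 1 - t), mLe i τN
        = ∑ u ∈ τN, (Icc (tMax u + t) (n-1)).card := (hsumeq τN hτNM).symm
      _ = (τN.biUnion (fun u => (Icc (tMax u + t) (n-1)).image (fun j => insert j u))).card :=
            (card_biUnion_fibers τN (n-1) t ht).symm
      _ ≤ (N.filter (fun F => ∀ j ∈ F, j ≤ n - 1)).card := Finset.card_le_card hNsub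
      _ = mLe (n-1) N := rfl
  calc mLe (n-1) L ≤ ∑ i ∈ Icc 1 (n - 1 - t), mLe i τ' := hLcount
    _ ≤ ∑ i ∈ Icc 1 (n - 1 - t), mLe i τN := Finset.sum_le_sum (fun i _ => hIH i)
    _ ≤ mLe (n-1) N := hNcount

lemma restrict_lex {n d t : ℕ} {L : Finset (Finset ℕ)} (hL : IsLexSet n d t L) :
    IsLexSet (n-1) d t (L.filter (fun F => ∀ j ∈ F, j ≤ n - 1)) := by
  constructor
  · intro F hF
    rw [Finset.mem_filter] at hF
    exact mem_M_of_le (hL.1 hF.1) hF.2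
  · intro u hu v hv hlex
    rw [Finset.mem_filter] at hu ⊢
    exact ⟨hL.2 u hu.1 v (M_mono (by omega) hv) hlex, fun x hx => le_n_of_mem_M hv hx⟩

lemma restrict_sss {n d t : ℕ} {N : Finset (Finset ℕ)} (hN : IsSSS n d t N) :
    IsSSS (n-1) d t (N.filter (fun F => ∀ j ∈ F, j ≤ n - 1)) := by
  constructor
  · intro F hF
    rw [Finset.mem_filter] at hF
    exact mem_M_of_le (hN.1 hF.1) hF.2
  · intro F hF j hj i hij hiF hmem
    rw [Finset.mem_filter] at hF ⊢
    exact ⟨hN.2 F hF.1 j hj i hij hiF (M_mono (by omega) hmem),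
      fun x hx => le_n_of_mem_M hmem hx⟩

lemma mLe_restrict {n i : ℕ} (hi : i ≤ n - 1) (X : Finset (Finset ℕ)) :
    mLe i (X.filter (fun F => ∀ j ∈ F, j ≤ n - 1)) = mLe i X := by
  rw [mLe_def, mLe_def, Finset.filter_filter]
  congr 1
  apply Finset.filter_congr
  intro F _
  constructor
  · rintro ⟨_, h2⟩
    exact h2
  · intro h
    exact ⟨fun j hj => le_trans (h j hj) hi, h⟩

/-- the main comparison lemma: pointwise inequality of the `mLe` counts -/
lemma ML : ∀ d, 1 ≤ d → ∀ n t (L N : Finset (Finset ℕ)), 1 ≤ t →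
    IsLexSet n d t L → IsSSS n d t N → L.card ≤ N.card → ∀ i, mLe i L ≤ mLe i N := by
  intro d
  induction d using Nat.strong_induction_on with
  | _ d ihd =>
  intro hd n
  induction n using Nat.strong_induction_on with
  | _ n ihn =>
  intro t L N ht hL hN hcard i
  by_cases hni : n ≤ i
  · rw [mLe_full hL.1 hni, mLe_full hN.1 hni]
    exact hcard
  push_neg at hni
  have hR : mLe (n-1) L ≤ mLe (n-1) N := by
    apply Rstep n d t ht hd ?_ L N hL hN hcard
    intro hd2 L' N' hL' hN' hc i'
    exact ihd (d-1) (by omega) (by omega) (n-t) t L' N' ht hL' hN' hc i'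
  have hL'lex := restrict_lex hL
  have hN'sss := restrict_sss hN
  have hc' : (L.filter (fun F => ∀ j ∈ F, j ≤ n - 1)).card ≤
      (N.filter (fun F => ∀ j ∈ F, j ≤ n - 1)).card := hR
  have h1 := mLe_restrict (n := n) (i := i) (by omega) L
  have h2 := mLe_restrict (n := n) (i := i) (by omega) N
  rw [← h1, ← h2]
  exact ihn (n-1) (by omega) t _ _ ht hL'lex hN'sss hc' i

end KKaux

/-- if `L` is a `t`-spread lex set and `N` a `t`-spread strongly stable
set in `M_{n,d,t}` with `|L| ≤ |N|`, then `|shad_t(L)| ≤ |shad_t(N)|`. -/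
theorem card_shad_lex_le (n d t : ℕ) (ht : 1 ≤ t) (hd : 1 ≤ d)
    (L N : Finset (Finset ℕ)) (hL : IsLexSet n d t L) (hN : IsSSS n d t N)
    (hcard : L.card ≤ N.card) :
    (shad t n d L).card ≤ (shad t n d N).card := by
  have hLS : IsSSS n d t L := KKaux.lex_isSSS hL
  rw [KKaux.card_shad_eq hLS ht hd, KKaux.card_shad_eq hN ht hd]
  apply Finset.sum_le_sum
  intro i _
  exact KKaux.ML d hd n t L N ht hL hN hcard i
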